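/- Let n ≥ 2 and let A be a real n×n singular irreducible M-matrix. For every nonzero pattern S_U ⊆ {(i,j) : 1 ≤ i ≤ j ≤ n} that contains all diagonal pairs (i,i) and does not contain (n−1,n), there exists a unique upper triangular matrix U_G such that (U_G)_{ij} = 0 for all (i,j) ∉ S_U and (A U_G)_{ij} = δ_{ij} for all (i,j) ∈ S_U. -/

import Mathlib

open Matrix Relation Filter
open scoped ENNReal NNReal

attribute [local instance] Matrix.linftyOpNormedRing Matrix.linftyOpNormedAlgebra

/-- The spectral radius of a real matrix: the maximum modulus of its complex
eigenvalues (supremum of moduli of elements of the complex spectrum). -/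
noncomputable def specRad {n : ℕ} (B : Matrix (Fin n) (Fin n) ℝ) : ℝ :=
  sSup ((fun z : ℂ => ‖z‖) '' spectrum ℂ (B.map Complex.ofReal))

/-- A real square matrix is a Z-matrix if its off-diagonal entries are nonpositive. -/
def IsZMatrix {n : ℕ} (A : Matrix (Fin n) (Fin n) ℝ) : Prop :=
  ∀ i j, i ≠ j → A i j ≤ 0

/-- A Z-matrix `A` is a nonsingular M-matrix if `A = s • 1 - B` with `B`
entrywise nonnegative and `s > ρ(B)`. -/
def IsNonsingularMMatrix {n : ℕ} (A : Matrix (Fin n) (Fin n) ℝ) : Prop :=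
  IsZMatrix A ∧ ∃ (s : ℝ) (B : Matrix (Fin n) (Fin n) ℝ),
    (∀ i j, 0 ≤ B i j) ∧ specRad B < s ∧ A = s • (1 : Matrix (Fin n) (Fin n) ℝ) - B

/-- A Z-matrix `A` is a singular M-matrix if `A = ρ(B) • 1 - B` with `B`
entrywise nonnegative. -/
def IsSingularMMatrix {n : ℕ} (A : Matrix (Fin n) (Fin n) ℝ) : Prop :=
  IsZMatrix A ∧ ∃ B : Matrix (Fin n) (Fin n) ℝ,
    (∀ i j, 0 ≤ B i j) ∧ A = specRad B • (1 : Matrix (Fin n) (Fin n) ℝ) - B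

/-- A matrix is irreducible if its directed graph (edge `i → j` iff `A i j ≠ 0`)
is strongly connected. -/
def IsIrreducibleMatrix {n : ℕ} (A : Matrix (Fin n) (Fin n) ℝ) : Prop :=
  ∀ i j : Fin n, Relation.ReflTransGen (fun a b : Fin n => A a b ≠ 0) i j

/-- Lower triangular real matrix. -/
def IsLowerTri {n : ℕ} (L : Matrix (Fin n) (Fin n) ℝ) : Prop :=
  ∀ i j : Fin n, i < j → L i j = 0

/-- Upper triangular real matrix. -/
def IsUpperTri {n : ℕ} (U : Matrix (Fin n) (Fin n) ℝ) : Prop :=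
  ∀ i j : Fin n, j < i → U i j = 0

/-- `L` is an FSAI lower triangular factor of `A` for the pattern `S`:
`L` is lower triangular, vanishes off the pattern, and `(L * A) i j = δ i j`
on the pattern. -/
def IsFSAILowerFactor {n : ℕ} (A L : Matrix (Fin n) (Fin n) ℝ)
    (S : Set (Fin n × Fin n)) : Prop :=
  IsLowerTri L ∧ (∀ p : Fin n × Fin n, p ∉ S → L p.1 p.2 = 0) ∧
    ∀ p : Fin n × Fin n, p ∈ S → (L * A) p.1 p.2 = if p.1 = p.2 then 1 else 0

/-- `U` is an FSAI upper triangular factor of `A` for the pattern `S`: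
`U` is upper triangular, vanishes off the pattern, and `(A * U) i j = δ i j`
on the pattern. -/
def IsFSAIUpperFactor {n : ℕ} (A U : Matrix (Fin n) (Fin n) ℝ)
    (S : Set (Fin n × Fin n)) : Prop :=
  IsUpperTri U ∧ (∀ p : Fin n × Fin n, p ∉ S → U p.1 p.2 = 0) ∧
    ∀ p : Fin n × Fin n, p ∈ S → (A * U) p.1 p.2 = if p.1 = p.2 then 1 else 0

namespace FsaiAux

variable {n : ℕ}

lemma mulVec_apply (B : Matrix (Fin n) (Fin n) ℝ) (v : Fin n → ℝ) (i : Fin n) :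
    (B *ᵥ v) i = ∑ j, B i j * v j := rfl

lemma mulVec_entry_nonneg {B : Matrix (Fin n) (Fin n) ℝ} (hB : ∀ i j, 0 ≤ B i j)
    {v : Fin n → ℝ} (hv : ∀ i, 0 ≤ v i) (i : Fin n) : 0 ≤ (B *ᵥ v) i := by
  rw [mulVec_apply]
  exact Finset.sum_nonneg fun j _ => mul_nonneg (hB i j) (hv j)

lemma mulVec_mono {B : Matrix (Fin n) (Fin n) ℝ} (hB : ∀ i j, 0 ≤ B i j)
    {u v : Fin n → ℝ} (h : ∀ i, u i ≤ v i) (i : Fin n) :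
    (B *ᵥ u) i ≤ (B *ᵥ v) i := by
  rw [mulVec_apply, mulVec_apply]
  exact Finset.sum_le_sum fun j _ => mul_le_mul_of_nonneg_left (h j) (hB i j)

lemma pow_entry_nonneg {B : Matrix (Fin n) (Fin n) ℝ} (hB : ∀ i j, 0 ≤ B i j) (k : ℕ) :
    ∀ i j, 0 ≤ (B ^ k) i j := by
  induction k with
  | zero => intro i j; rw [pow_zero]; by_cases h : i = j <;> simp [Matrix.one_apply, h]
  | succ k ih =>
    intro i j
    rw [pow_succ, Matrix.mul_apply]
    exact Finset.sum_nonneg fun l _ => mul_nonneg (ih i l) (hB l j)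

lemma map_ofReal_pow (B : Matrix (Fin n) (Fin n) ℝ) (k : ℕ) :
    (B.map Complex.ofReal) ^ k = (B ^ k).map Complex.ofReal := by
  induction k with
  | zero =>
    ext i j
    by_cases h : i = j <;> simp [Matrix.one_apply, h]
  | succ k ih =>
    rw [pow_succ, pow_succ, ih]
    ext i j
    simp [Matrix.mul_apply, Matrix.map_apply]

lemma spec_nonempty (hn : 0 < n) (B : Matrix (Fin n) (Fin n) ℝ) :
    (spectrum ℂ (B.map Complex.ofReal)).Nonempty := by
  haveI : Nonempty (Fin n) := Fin.pos_iff_nonempty.mp hn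
  exact spectrum.nonempty _

lemma abs_le_of_mem (hn : 0 < n) {B : Matrix (Fin n) (Fin n) ℝ} {z : ℂ}
    (hz : z ∈ spectrum ℂ (B.map Complex.ofReal)) :
    ‖z‖ ≤ ‖B.map Complex.ofReal‖ := by
  haveI : Nonempty (Fin n) := Fin.pos_iff_nonempty.mp hn
  simpa using spectrum.norm_le_norm_of_mem hz

lemma specRad_bddAbove (hn : 0 < n) (B : Matrix (Fin n) (Fin n) ℝ) :
    BddAbove ((fun z : ℂ => ‖z‖) '' spectrum ℂ (B.map Complex.ofReal)) := by
  refine ⟨‖B.map Complex.ofReal‖, ?_⟩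
  rintro x ⟨z, hz, rfl⟩
  exact abs_le_of_mem hn hz

lemma specRad_nonneg (hn : 0 < n) (B : Matrix (Fin n) (Fin n) ℝ) :
    0 ≤ specRad B := by
  obtain ⟨z, hz⟩ := spec_nonempty hn B
  exact le_trans (norm_nonneg z)
    (le_csSup (specRad_bddAbove hn B) ⟨z, hz, rfl⟩)

lemma le_specRad_of_subinvariant (hn : 0 < n) {B : Matrix (Fin n) (Fin n) ℝ}
    (hB : ∀ i j, 0 ≤ B i j) {c : ℝ} (hc : 0 ≤ c) {w : Fin n → ℝ}
    (hw : ∀ i, 0 < w i) (h : ∀ i, c * w i ≤ (B *ᵥ w) i) : c ≤ specRad B := by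
  haveI : Nonempty (Fin n) := Fin.pos_iff_nonempty.mp hn
  -- iterate the subinvariance inequality
  have hpow : ∀ k : ℕ, ∀ i, c ^ k * w i ≤ ((B ^ k) *ᵥ w) i := by
    intro k
    induction k with
    | zero => intro i; simp [Matrix.one_mulVec]
    | succ k ih =>
      intro i
      have h1 : (B ^ (k + 1)) *ᵥ w = B *ᵥ ((B ^ k) *ᵥ w) := by
        rw [Matrix.mulVec_mulVec, ← pow_succ']
      rw [h1]
      have h2 : (B *ᵥ fun j => c ^ k * w j) i ≤ (B *ᵥ ((B ^ k) *ᵥ w)) i :=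
        mulVec_mono hB (fun j => ih j) i
      refine le_trans ?_ h2
      have h3 : (B *ᵥ fun j => c ^ k * w j) i = c ^ k * (B *ᵥ w) i := by
        rw [mulVec_apply, mulVec_apply, Finset.mul_sum]
        exact Finset.sum_congr rfl fun j _ => by ring
      rw [h3, pow_succ']
      calc c * c ^ k * w i = c ^ k * (c * w i) := by ring
      _ ≤ c ^ k * (B *ᵥ w) i := by
          exact mul_le_mul_of_nonneg_left (h i) (pow_nonneg hc k)
  -- norm lower bound
  have hnorm : ∀ k : ℕ, c ^ k ≤ ‖(B.map Complex.ofReal) ^ k‖ := by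
    intro k
    obtain ⟨i₀, -, hi₀⟩ := Finset.exists_max_image Finset.univ w ⟨⟨0, hn⟩, Finset.mem_univ _⟩
    have hPn : ∀ i j, 0 ≤ (B ^ k) i j := pow_entry_nonneg hB k
    have key : c ^ k * w i₀ ≤ (∑ j, (B ^ k) i₀ j) * w i₀ := by
      calc c ^ k * w i₀ ≤ ((B ^ k) *ᵥ w) i₀ := hpow k i₀
      _ = ∑ j, (B ^ k) i₀ j * w j := rfl
      _ ≤ ∑ j, (B ^ k) i₀ j * w i₀ :=
          Finset.sum_le_sum fun j _ =>
            mul_le_mul_of_nonneg_left (hi₀ j (Finset.mem_univ j)) (hPn i₀ j)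
      _ = (∑ j, (B ^ k) i₀ j) * w i₀ := by rw [Finset.sum_mul]
    have key2 : c ^ k ≤ ∑ j, (B ^ k) i₀ j := le_of_mul_le_mul_right key (hw i₀)
    rw [map_ofReal_pow]
    calc c ^ k ≤ ∑ j, (B ^ k) i₀ j := key2
    _ = ∑ j, ‖((B ^ k).map Complex.ofReal) i₀ j‖ := by
        refine Finset.sum_congr rfl fun j _ => ?_
        simp [Matrix.map_apply, Complex.norm_real, Real.norm_eq_abs,
          abs_of_nonneg (hPn i₀ j)]
    _ ≤ ‖(B ^ k).map Complex.ofReal‖ := by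
        rw [Matrix.linfty_opNorm_def]
        have h4 : (∑ j, ‖((B ^ k).map Complex.ofReal) i₀ j‖₊ : ℝ≥0)
            ≤ (Finset.univ.sup fun i => ∑ j, ‖((B ^ k).map Complex.ofReal) i j‖₊) :=
          Finset.le_sup (f := fun i => ∑ j, ‖((B ^ k).map Complex.ofReal) i j‖₊) (Finset.mem_univ i₀)
        calc (∑ j, ‖((B ^ k).map Complex.ofReal) i₀ j‖ : ℝ)
            = ((∑ j, ‖((B ^ k).map Complex.ofReal) i₀ j‖₊ : ℝ≥0) : ℝ) := by
              push_cast; rfl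
        _ ≤ _ := NNReal.coe_le_coe.mpr h4
  -- Gelfand's formula
  set M := B.map Complex.ofReal with hM
  have hT := spectrum.pow_nnnorm_pow_one_div_tendsto_nhds_spectralRadius M
  have hlb : ENNReal.ofReal c ≤ spectralRadius ℂ M := by
    refine ge_of_tendsto hT ?_
    filter_upwards [Filter.eventually_ge_atTop 1] with k hk
    have hk0 : (k : ℝ) ≠ 0 := Nat.cast_ne_zero.mpr (by omega)
    have h1 : (ENNReal.ofReal c) ^ (k : ℕ) ≤ (‖M ^ k‖₊ : ℝ≥0∞) := by
      rw [← ENNReal.ofReal_pow hc, ← enorm_eq_nnnorm, ← ofReal_norm]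
      exact ENNReal.ofReal_le_ofReal (hnorm k)
    have h2 := ENNReal.rpow_le_rpow h1 (by positivity : (0:ℝ) ≤ 1 / k)
    rwa [← ENNReal.rpow_natCast (ENNReal.ofReal c) k, ← ENNReal.rpow_mul,
      mul_one_div_cancel hk0, ENNReal.rpow_one] at h2
  have hub : spectralRadius ℂ M ≤ ENNReal.ofReal (specRad B) := by
    rw [spectralRadius]
    refine iSup₂_le fun z hz => ?_
    rw [← enorm_eq_nnnorm, ← ofReal_norm]
    refine ENNReal.ofReal_le_ofReal ?_
    exact le_csSup (specRad_bddAbove hn B) ⟨z, hz, rfl⟩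
  exact (ENNReal.ofReal_le_ofReal_iff (specRad_nonneg hn B)).mp (le_trans hlb hub)

lemma crossing {α : Type*} (R : α → α → Prop) (s : Set α) :
    ∀ {a c : α}, Relation.ReflTransGen R a c → a ∉ s → c ∈ s →
      ∃ p, p ∉ s ∧ ∃ q ∈ s, R p q := by
  intro a c h
  induction h with
  | refl => intro ha hc; exact absurd hc ha
  | @tail b c hab hbc ih =>
    intro ha hc
    by_cases hb : b ∈ s
    · exact ih ha hb
    · exact ⟨b, hb, c, hc, hbc⟩

lemma onePlusPow_mulVec_pos {B : Matrix (Fin n) (Fin n) ℝ} (hB : ∀ i j, 0 ≤ B i j)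
    (hirrB : ∀ i j : Fin n, Relation.ReflTransGen (fun a b => B a b ≠ 0) i j)
    {y : Fin n → ℝ} (hy0 : ∀ i, 0 ≤ y i) (hy : y ≠ 0) (i : Fin n) :
    0 < (((1 + B) ^ (n - 1)) *ᵥ y) i := by
  classical
  set Y : ℕ → Fin n → ℝ := fun k => ((1 + B) ^ k) *ᵥ y with hY
  have hstep : ∀ k i, Y (k + 1) i = Y k i + (B *ᵥ Y k) i := by
    intro k i
    have h1 : ((1 + B) ^ (k + 1)) *ᵥ y = (1 + B) *ᵥ (((1 + B) ^ k) *ᵥ y) := by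
      rw [Matrix.mulVec_mulVec, ← pow_succ']
    simp only [hY, h1, Matrix.add_mulVec, Matrix.one_mulVec, Pi.add_apply]
  have hnn : ∀ k i, 0 ≤ Y k i := by
    intro k
    induction k with
    | zero => intro i; simpa [hY, Matrix.one_mulVec] using hy0 i
    | succ k ih =>
      intro i
      rw [hstep]
      exact add_nonneg (ih i) (mulVec_entry_nonneg hB ih i)
  have hmono : ∀ k i, 0 < Y k i → 0 < Y (k + 1) i := by
    intro k i hi
    rw [hstep]
    exact add_pos_of_pos_of_nonneg hi (mulVec_entry_nonneg hB (hnn k) i)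
  set s : ℕ → Finset (Fin n) := fun k => Finset.univ.filter (fun i => 0 < Y k i) with hs
  have hsub : ∀ k, s k ⊆ s (k + 1) := by
    intro k i hi
    simp only [hs, Finset.mem_filter, Finset.mem_univ, true_and] at hi ⊢
    exact hmono k i hi
  have hs0 : (s 0).Nonempty := by
    obtain ⟨j, hj⟩ := Function.ne_iff.mp hy
    refine ⟨j, ?_⟩
    simp only [hs, Finset.mem_filter, Finset.mem_univ, true_and, hY, pow_zero,
      Matrix.one_mulVec]
    exact lt_of_le_of_ne (hy0 j) (Ne.symm hj)
  have hs0sub : ∀ k, s 0 ⊆ s k := by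
    intro k
    induction k with
    | zero => exact Finset.Subset.refl _
    | succ k ih => exact Finset.Subset.trans ih (hsub k)
  have hgrow : ∀ k, s k = Finset.univ ∨ k + 1 ≤ (s k).card := by
    intro k
    induction k with
    | zero =>
      by_cases h : s 0 = Finset.univ
      · exact Or.inl h
      · exact Or.inr (Finset.card_pos.mpr hs0)
    | succ k ih =>
      by_cases h : s (k + 1) = Finset.univ
      · exact Or.inl h
      · right
        have hknu : s k ≠ Finset.univ := by
          intro hEq
          exact h (Finset.univ_subset_iff.mp (hEq ▸ hsub k))
        have hck : k + 1 ≤ (s k).card := by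
          rcases ih with h' | h'
          · exact absurd h' hknu
          · exact h'
        obtain ⟨b, hb⟩ : ∃ b, b ∉ s k := by
          by_contra hcon
          push_neg at hcon
          exact hknu (Finset.eq_univ_iff_forall.mpr hcon)
        obtain ⟨j, hj⟩ := hs0
        have hjk : j ∈ s k := hs0sub k hj
        -- crossing edge from outside s k into s k
        obtain ⟨p, hp, q, hq, hpq⟩ :=
          crossing (fun a b => B a b ≠ 0) (↑(s k) : Set (Fin n)) (hirrB b j)
            (by simpa using hb) (by simpa using hjk)
        have hp' : p ∉ s k := by simpa using hp
        have hq' : q ∈ s k := by simpa using hq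
        have hYq : 0 < Y k q := by
          simpa only [hs, Finset.mem_filter, Finset.mem_univ, true_and] using hq'
        have hpt : p ∈ s (k + 1) := by
          simp only [hs, Finset.mem_filter, Finset.mem_univ, true_and]
          rw [hstep]
          have hBpq : 0 < B p q := lt_of_le_of_ne (hB p q) (Ne.symm hpq)
          have hsum : 0 < (B *ᵥ Y k) p := by
            rw [mulVec_apply]
            refine Finset.sum_pos' (fun m _ => mul_nonneg (hB p m) (hnn k m)) ?_
            exact ⟨q, Finset.mem_univ q, mul_pos hBpq hYq⟩
          exact add_pos_of_nonneg_of_pos (hnn k p) hsum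
        have hss : s k ⊂ s (k + 1) :=
          (Finset.ssubset_iff_of_subset (hsub k)).mpr ⟨p, hpt, hp'⟩
        have := Finset.card_lt_card hss
        omega
  have hfin : s (n - 1) = Finset.univ := by
    rcases hgrow (n - 1) with h | h
    · exact h
    · have h1 : (s (n - 1)).card ≤ Fintype.card (Fin n) := Finset.card_le_univ _
      rw [Fintype.card_fin] at h1
      have hn : 0 < n := Fin.pos i
      refine (Finset.card_eq_iff_eq_univ _).mp ?_
      rw [Fintype.card_fin]
      omega
  have : i ∈ s (n - 1) := hfin ▸ Finset.mem_univ i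
  simpa only [hs, Finset.mem_filter, Finset.mem_univ, true_and] using this




lemma irr_transfer {A B : Matrix (Fin n) (Fin n) ℝ} {ρ : ℝ}
    (hAeq : A = ρ • (1 : Matrix (Fin n) (Fin n) ℝ) - B) (hirr : IsIrreducibleMatrix A) :
    ∀ i j : Fin n, Relation.ReflTransGen (fun a b => B a b ≠ 0) i j := by
  intro i j
  induction hirr i j with
  | refl => exact Relation.ReflTransGen.refl
  | @tail b c hab hbc ih =>
    rcases eq_or_ne b c with rfl | hbc'
    · exact ih
    · refine ih.tail ?_
      intro h0
      apply hbc
      rw [hAeq]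
      simp [Matrix.sub_apply, Matrix.smul_apply, Matrix.one_apply, hbc', h0]

lemma key_inj (hn : 2 ≤ n) (A : Matrix (Fin n) (Fin n) ℝ) (hA : IsSingularMMatrix A)
    (hirr : IsIrreducibleMatrix A) (T : Finset (Fin n)) (hT : T ≠ Finset.univ)
    (x : Fin n → ℝ) (hsupp : ∀ i, i ∉ T → x i = 0)
    (hAx : ∀ i ∈ T, (A *ᵥ x) i = 0) : x = 0 := by
  classical
  obtain ⟨hZ, B, hB, hAeq⟩ := hA
  set ρ := specRad B with hρ
  have hn0 : 0 < n := by omega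
  have hρ0 : 0 ≤ ρ := specRad_nonneg hn0 B
  by_contra hx
  have hirrB := irr_transfer hAeq hirr
  set y : Fin n → ℝ := fun i => |x i| with hy
  have hy0 : ∀ i, 0 ≤ y i := fun i => abs_nonneg _
  have hyne : y ≠ 0 := by
    intro h
    apply hx
    funext i
    have := congrFun h i
    simpa [hy, abs_eq_zero] using this
  have hBx : ∀ i ∈ T, (B *ᵥ x) i = ρ * x i := by
    intro i hi
    have h1 := hAx i hi
    rw [hAeq, Matrix.sub_mulVec, Matrix.smul_mulVec, Matrix.one_mulVec] at h1
    have h2 : ρ * x i - (B *ᵥ x) i = 0 := by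
      simpa [Pi.sub_apply, Pi.smul_apply, smul_eq_mul] using h1
    linarith
  have hsub : ∀ i, ρ * y i ≤ (B *ᵥ y) i := by
    intro i
    by_cases hi : i ∈ T
    · have h2 : |(B *ᵥ x) i| = ρ * y i := by
        rw [hBx i hi, abs_mul, abs_of_nonneg hρ0]
      rw [← h2]
      calc |(B *ᵥ x) i| = |∑ j, B i j * x j| := by rw [mulVec_apply]
      _ ≤ ∑ j, |B i j * x j| := Finset.abs_sum_le_sum_abs _ _
      _ = ∑ j, B i j * y j := by
          refine Finset.sum_congr rfl fun j _ => ?_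
          rw [abs_mul, abs_of_nonneg (hB i j)]
      _ = (B *ᵥ y) i := (mulVec_apply _ _ _).symm
    · have hyi : y i = 0 := by simp [hy, hsupp i hi]
      rw [hyi, mul_zero]
      exact mulVec_entry_nonneg hB hy0 i
  set C := (1 + B) ^ (n - 1) with hC
  have hw : ∀ i, 0 < (C *ᵥ y) i := onePlusPow_mulVec_pos hB hirrB hy0 hyne
  set z : Fin n → ℝ := fun i => (B *ᵥ y) i - ρ * y i with hz
  have hz0 : ∀ i, 0 ≤ z i := fun i => by
    have := hsub i
    simp only [hz]
    linarith
  by_cases hzz : z = 0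
  · -- B *ᵥ y = ρ • y, so C *ᵥ y = (1+ρ)^(n-1) • y which vanishes off T
    have hBy : B *ᵥ y = ρ • y := by
      funext i
      have := congrFun hzz i
      simp only [hz, Pi.zero_apply] at this
      simp only [Pi.smul_apply, smul_eq_mul]
      linarith
    have hCy : ∀ k : ℕ, ((1 + B) ^ k) *ᵥ y = (1 + ρ) ^ k • y := by
      intro k
      induction k with
      | zero => simp [Matrix.one_mulVec]
      | succ k ih =>
        have h1 : ((1 + B) ^ (k + 1)) *ᵥ y = (1 + B) *ᵥ (((1 + B) ^ k) *ᵥ y) := by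
          rw [Matrix.mulVec_mulVec, ← pow_succ']
        rw [h1, ih, Matrix.mulVec_smul, Matrix.add_mulVec, Matrix.one_mulVec, hBy]
        funext i
        simp only [Pi.smul_apply, Pi.add_apply, smul_eq_mul]
        ring
    obtain ⟨i0, hi0⟩ : ∃ i0, i0 ∉ T := by
      by_contra hcon
      push_neg at hcon
      exact hT (Finset.eq_univ_iff_forall.mpr hcon)
    have hwi0 : (C *ᵥ y) i0 = 0 := by
      rw [hC, hCy]
      have hyi0 : y i0 = 0 := by simp [hy, hsupp i0 hi0]
      simp [hyi0]
    exact absurd hwi0 (ne_of_gt (hw i0))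
  · have hv : ∀ i, 0 < (C *ᵥ z) i := onePlusPow_mulVec_pos hB hirrB hz0 hzz
    have hcomm : B * C = C * B := by
      have h1 : Commute B (1 + B) := (Commute.one_right B).add_right (Commute.refl B)
      exact (h1.pow_right (n - 1)).eq
    have hBw : ∀ i, (B *ᵥ (C *ᵥ y)) i = ρ * (C *ᵥ y) i + (C *ᵥ z) i := by
      intro i
      have h1 : B *ᵥ (C *ᵥ y) = C *ᵥ (B *ᵥ y) := by
        rw [Matrix.mulVec_mulVec, Matrix.mulVec_mulVec, hcomm]
      have h2 : B *ᵥ y = ρ • y + z := by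
        funext j
        simp only [hz, Pi.add_apply, Pi.smul_apply, smul_eq_mul]
        ring
      rw [h1, h2, Matrix.mulVec_add, Matrix.mulVec_smul]
      simp only [Pi.add_apply, Pi.smul_apply, smul_eq_mul]
    obtain ⟨i1, -, hi1⟩ := Finset.exists_min_image Finset.univ
      (fun i => (C *ᵥ z) i / (C *ᵥ y) i) ⟨⟨0, hn0⟩, Finset.mem_univ _⟩
    set ε := (C *ᵥ z) i1 / (C *ᵥ y) i1 with hε
    have hεpos : 0 < ε := div_pos (hv i1) (hw i1)
    have hsubinv : ∀ i, (ρ + ε) * (C *ᵥ y) i ≤ (B *ᵥ (C *ᵥ y)) i := by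
      intro i
      rw [hBw i]
      have h3 : ε ≤ (C *ᵥ z) i / (C *ᵥ y) i := hi1 i (Finset.mem_univ i)
      have h4 : ε * (C *ᵥ y) i ≤ (C *ᵥ z) i := by
        calc ε * (C *ᵥ y) i ≤ ((C *ᵥ z) i / (C *ᵥ y) i) * (C *ᵥ y) i :=
            mul_le_mul_of_nonneg_right h3 (le_of_lt (hw i))
        _ = (C *ᵥ z) i := div_mul_cancel₀ _ (ne_of_gt (hw i))
      nlinarith [hw i]
    have hfinal := le_specRad_of_subinvariant hn0 hB
      (by linarith : (0:ℝ) ≤ ρ + ε) hw hsubinv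
    rw [← hρ] at hfinal
    linarith

lemma column_solve (hn : 2 ≤ n) (A : Matrix (Fin n) (Fin n) ℝ) (hA : IsSingularMMatrix A)
    (hirr : IsIrreducibleMatrix A) (T : Finset (Fin n)) (hT : T ≠ Finset.univ)
    (b : Fin n → ℝ) :
    ∃! x : Fin n → ℝ, (∀ i, i ∉ T → x i = 0) ∧ ∀ i ∈ T, (A *ᵥ x) i = b i := by
  classical
  set M : Matrix {i // i ∈ T} {i // i ∈ T} ℝ := Matrix.of fun i k => A i.1 k.1 with hM
  have ext_eq : ∀ (u : {i // i ∈ T} → ℝ) (i : Fin n) (hi : i ∈ T),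
      (A *ᵥ (fun j => if h : j ∈ T then u ⟨j, h⟩ else 0)) i = (M *ᵥ u) ⟨i, hi⟩ := by
    intro u i hi
    rw [mulVec_apply]
    have h1 : ∑ j, A i j * (if h : j ∈ T then u ⟨j, h⟩ else 0)
        = ∑ j ∈ T, A i j * (if h : j ∈ T then u ⟨j, h⟩ else 0) := by
      refine (Finset.sum_subset (Finset.subset_univ T) ?_).symm
      intro j _ hj
      rw [dif_neg hj, mul_zero]
    rw [h1]
    rw [show (M *ᵥ u) ⟨i, hi⟩ = ∑ k : {i // i ∈ T}, M ⟨i, hi⟩ k * u k from rfl]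
    rw [Finset.univ_eq_attach, ← Finset.sum_attach T (fun j => A i j * (if h : j ∈ T then u ⟨j, h⟩ else 0))]
    refine Finset.sum_congr rfl fun k _ => ?_
    rw [dif_pos k.2]
    rfl
  have h0 : ∀ u : {i // i ∈ T} → ℝ, M *ᵥ u = 0 → u = 0 := by
    intro u hu
    set x : Fin n → ℝ := fun j => if h : j ∈ T then u ⟨j, h⟩ else 0 with hx
    have hx0 : x = 0 := by
      refine key_inj hn A hA hirr T hT x (fun i hi => dif_neg hi) ?_
      intro i hi
      rw [ext_eq u i hi, hu]
      rfl
    funext k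
    have := congrFun hx0 k.1
    simpa [hx, dif_pos k.2] using this
  have hinj : Function.Injective M.mulVecLin := by
    intro u v huv
    have h1 : M *ᵥ (u - v) = 0 := by
      rw [Matrix.mulVec_sub]
      simp only [Matrix.mulVecLin_apply] at huv
      rw [huv, sub_self]
    have := h0 _ h1
    exact sub_eq_zero.mp this
  have hsurj : Function.Surjective M.mulVecLin :=
    (LinearMap.injective_iff_surjective).mp hinj
  obtain ⟨u, hu⟩ := hsurj (fun k => b k.1)
  simp only [Matrix.mulVecLin_apply] at hu
  refine ⟨fun j => if h : j ∈ T then u ⟨j, h⟩ else 0, ⟨fun i hi => dif_neg hi, ?_⟩, ?_⟩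
  · intro i hi
    rw [ext_eq u i hi, hu]
  · rintro x' ⟨hx'supp, hx'val⟩
    have hdiff : x' - (fun j => if h : j ∈ T then u ⟨j, h⟩ else 0) = 0 := by
      refine key_inj hn A hA hirr T hT _ ?_ ?_
      · intro i hi
        simp [hx'supp i hi, dif_neg hi]
      · intro i hi
        rw [Matrix.mulVec_sub]
        simp only [Pi.sub_apply]
        rw [hx'val i hi, ext_eq u i hi, hu]
        simp
    funext j
    have := congrFun hdiff j
    simp only [Pi.sub_apply, Pi.zero_apply, sub_eq_zero] at this
    exact this

end FsaiAux

theorem fsai_upper_exists_unique (n : ℕ) (hn : 2 ≤ n)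
    (A : Matrix (Fin n) (Fin n) ℝ)
    (hA : IsSingularMMatrix A) (hirr : IsIrreducibleMatrix A)
    (S : Set (Fin n × Fin n))
    (hS1 : S ⊆ {p : Fin n × Fin n | p.1 ≤ p.2})
    (hS2 : ∀ i : Fin n, (i, i) ∈ S)
    (hS3 : ((⟨n - 2, by omega⟩ : Fin n), (⟨n - 1, by omega⟩ : Fin n)) ∉ S) :
    ∃! U : Matrix (Fin n) (Fin n) ℝ, IsFSAIUpperFactor A U S := by
  classical
  set lastI : Fin n := ⟨n - 1, by omega⟩ with hlastI
  set T : Fin n → Finset (Fin n) := fun j => Finset.univ.filter (fun i => (i, j) ∈ S) with hT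
  have hmemT : ∀ i j : Fin n, i ∈ T j ↔ (i, j) ∈ S := by
    intro i j; simp [hT]
  have hTprop : ∀ j, T j ≠ Finset.univ := by
    intro j hEq
    by_cases hj : j = lastI
    · subst hj
      have hmem : (⟨n - 2, by omega⟩ : Fin n) ∈ T lastI := hEq ▸ Finset.mem_univ _
      exact hS3 ((hmemT _ _).mp hmem)
    · have hmem : lastI ∈ T j := hEq ▸ Finset.mem_univ _
      have h1 : lastI ≤ j := hS1 ((hmemT _ _).mp hmem)
      have h2 : j ≤ lastI := by
        have hj2 := j.2
        rw [Fin.le_def]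
        simp only [hlastI]
        omega
      exact hj (le_antisymm h2 h1)
  have hcol : ∀ j : Fin n, ∃! x : Fin n → ℝ, (∀ i, i ∉ T j → x i = 0) ∧
      ∀ i ∈ T j, (A *ᵥ x) i = (if i = j then (1:ℝ) else 0) :=
    fun j => FsaiAux.column_solve hn A hA hirr (T j) (hTprop j)
      (fun i => if i = j then (1:ℝ) else 0)
  choose xcol hxcol using hcol
  refine ⟨Matrix.of (fun i j => xcol j i), ⟨?_, ?_, ?_⟩, ?_⟩
  · intro i j hji
    show xcol j i = 0
    refine (hxcol j).1.1 i ?_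
    rw [hmemT]
    intro hmem
    exact absurd (hS1 hmem) (not_le.mpr hji)
  · intro p hp
    show xcol p.2 p.1 = 0
    refine (hxcol p.2).1.1 p.1 ?_
    rw [hmemT]
    simpa using hp
  · intro p hp
    have hmem : p.1 ∈ T p.2 := (hmemT _ _).mpr (by simpa using hp)
    have h1 := (hxcol p.2).1.2 p.1 hmem
    show (A * Matrix.of (fun i j => xcol j i)) p.1 p.2 = _
    rw [Matrix.mul_apply]
    rw [FsaiAux.mulVec_apply] at h1
    simpa using h1
  · intro U' hU'
    obtain ⟨hU'tri, hU'supp, hU'val⟩ := hU'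
    have hcolU : ∀ j, (fun i => U' i j) = xcol j := by
      intro j
      refine (hxcol j).2 _ ⟨?_, ?_⟩
      · intro i hi
        exact hU'supp (i, j) (fun hmem => hi ((hmemT i j).mpr hmem))
      · intro i hi
        have h2 := hU'val (i, j) ((hmemT i j).mp hi)
        rw [Matrix.mul_apply] at h2
        rw [FsaiAux.mulVec_apply]
        exact h2
    ext i j
    exact congrFun (hcolU j) i
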